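/- In E-Wythoff, the set of P-positions is exactly {(⌊φn⌋, ⌊φn⌋ + n) : n ≥ 0} (up to swapping coordinates), coinciding with the P-positions of Wythoff's game, where φ = (1+√5)/2. -/

import Mathlib

noncomputable section

/-- The golden ratio. -/
def phi : ℝ := (1 + Real.sqrt 5) / 2

/-- Minimum excluded value of a set of naturals. -/
def mex (S : Set ℕ) : ℕ := sInf {n | n ∉ S}

/-- Sort a pair of naturals into nondecreasing order. -/
def sortPair (p : ℕ × ℕ) : ℕ × ℕ := (min p.1 p.2, max p.1 p.2)

/-- Moves of E-Wythoff (positions are unordered pairs of pile sizes): remove a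
positive number of tokens from one pile, an equal positive number from both
piles, or `k` tokens from the smaller pile and `l` from the larger pile where
`k > l ≥ 0`. -/
def EMove (p q : ℕ × ℕ) : Prop :=
  (∃ t < max p.1 p.2, sortPair q = sortPair (min p.1 p.2, t)) ∨
  (∃ t < min p.1 p.2, sortPair q = sortPair (t, max p.1 p.2)) ∨
  (∃ k, 0 < k ∧ k ≤ min p.1 p.2 ∧ sortPair q = (min p.1 p.2 - k, max p.1 p.2 - k)) ∨
  (∃ k l, l < k ∧ k ≤ min p.1 p.2 ∧ sortPair q = sortPair (min p.1 p.2 - k, max p.1 p.2 - l))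

lemma EMove.sum_lt {p q : ℕ × ℕ} (h : EMove p q) : q.1 + q.2 < p.1 + p.2 := by
  rcases h with ⟨t, ht, hq⟩ | ⟨t, ht, hq⟩ | ⟨k, hk0, hk, hq⟩ | ⟨k, l, hlk, hk, hq⟩ <;>
  · simp only [sortPair, Prod.mk.injEq] at hq
    omega

/-- Sprague–Grundy function of E-Wythoff. -/
noncomputable def grundyE : ℕ × ℕ → ℕ
  | p => mex {v | ∃ q, ∃ _ : EMove p q, grundyE q = v}
termination_by p => p.1 + p.2
decreasing_by exact EMove.sum_lt (by assumption)

/-- P-positions of E-Wythoff. -/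
def EPPos : ℕ × ℕ → Prop
  | p => ∀ q, EMove p q → ¬ EPPos q
termination_by p => p.1 + p.2
decreasing_by exact EMove.sum_lt (by assumption)

section Aux
open goldenRatio Real
open scoped symmDiff

lemma phi_pos : 0 < phi := Real.goldenRatio_pos
lemma one_lt_phi : 1 < phi := Real.one_lt_goldenRatio
lemma phi_sq : phi ^ 2 = phi + 1 := Real.goldenRatio_sq
lemma phi_irr : Irrational phi := Real.goldenRatio_irrational

lemma phi_conj : Real.HolderConjugate phi (phi + 1) := by
  rw [Real.holderConjugate_iff]
  constructor
  · exact one_lt_phi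
  · have h1 : phi ≠ 0 := ne_of_gt phi_pos
    have h2 : phi + 1 ≠ 0 := by nlinarith [phi_pos]
    rw [inv_add_inv h1 h2, div_eq_one_iff_eq (mul_ne_zero h1 h2)]
    linear_combination -phi_sq

def Aa (n : ℕ) : ℕ := ⌊phi * n⌋₊
def Bb (n : ℕ) : ℕ := Aa n + n

lemma Aa_zero : Aa 0 = 0 := by simp [Aa]

lemma Aa_int0 (n : ℕ) : (Aa n : ℤ) = ⌊phi * (n:ℝ)⌋ :=
  Int.natCast_floor_eq_floor (mul_nonneg phi_pos.le (Nat.cast_nonneg n))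

lemma Aa_int (n : ℕ) : (Aa n : ℤ) = beattySeq phi (n : ℤ) := by
  rw [Aa_int0, beattySeq]
  congr 1
  push_cast
  ring

lemma Bb_int (n : ℕ) : (Bb n : ℤ) = beattySeq (phi + 1) (n : ℤ) := by
  have h : (((n:ℤ)):ℝ) * (phi + 1) = phi * (n:ℝ) + (n:ℕ) := by push_cast; ring
  rw [beattySeq, h, Int.floor_add_natCast, Bb]
  push_cast [Aa_int0]
  ring

lemma Aa_strictMono : StrictMono Aa := by
  apply strictMono_nat_of_lt_succ
  intro n
  have h0 : (0:ℝ) ≤ phi * n := mul_nonneg phi_pos.le (Nat.cast_nonneg n)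
  have h1 : phi * n + 1 ≤ phi * (n + 1 : ℕ) := by
    push_cast
    nlinarith [one_lt_phi, Nat.cast_nonneg (α := ℝ) n]
  have := Nat.floor_le_floor h1
  rw [Nat.floor_add_one h0] at this
  simp only [Aa]
  omega

lemma Bb_strictMono : StrictMono Bb := fun a b h => by
  simpa [Bb] using Nat.add_lt_add (Aa_strictMono h) h

lemma Aa_pos {n : ℕ} (hn : 0 < n) : 0 < Aa n := by
  have := Aa_strictMono hn
  omega

lemma symmdiff_eq :
    {x | ∃ k > 0, beattySeq phi k = x} ∆ {x | ∃ k > 0, beattySeq (phi + 1) k = x} = {n : ℤ | 0 < n} :=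
  Irrational.beattySeq_symmDiff_beattySeq_pos phi_conj phi_irr

lemma cover (a : ℕ) : ∃ m : ℕ, a = Aa m ∨ (0 < m ∧ a = Bb m) := by
  rcases Nat.eq_zero_or_pos a with h | h
  · exact ⟨0, Or.inl (by simp [h, Aa_zero])⟩
  · have hj : (a : ℤ) ∈ {n : ℤ | 0 < n} := show (0:ℤ) < (a:ℤ) by exact_mod_cast h
    rw [← symmdiff_eq, Set.mem_symmDiff] at hj
    rcases hj with ⟨⟨k, hk0, hjk⟩, -⟩ | ⟨⟨k, hk0, hjk⟩, -⟩
    · refine ⟨k.toNat, Or.inl ?_⟩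
      have hk : ((k.toNat : ℕ) : ℤ) = k := Int.toNat_of_nonneg hk0.le
      have := Aa_int k.toNat
      rw [hk, hjk] at this
      exact_mod_cast this.symm
    · refine ⟨k.toNat, Or.inr ⟨by omega, ?_⟩⟩
      have hk : ((k.toNat : ℕ) : ℤ) = k := Int.toNat_of_nonneg hk0.le
      have := Bb_int k.toNat
      rw [hk, hjk] at this
      exact_mod_cast this.symm

lemma disj {m k : ℕ} (hm : 0 < m) (hk : 0 < k) : Aa m ≠ Bb k := by
  intro h
  have hmem1 : (Aa m : ℤ) ∈ {x | ∃ k > 0, beattySeq phi k = x} :=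
    ⟨(m : ℤ), by exact_mod_cast hm, (Aa_int m).symm⟩
  have hmem2 : (Aa m : ℤ) ∈ {x | ∃ k > 0, beattySeq (phi + 1) k = x} :=
    ⟨(k : ℤ), by exact_mod_cast hk, by rw [← Bb_int, h]⟩
  have hpos : (Aa m : ℤ) ∈ {n : ℤ | 0 < n} := show (0:ℤ) < (Aa m:ℤ) by exact_mod_cast Aa_pos hm
  rw [← symmdiff_eq, Set.mem_symmDiff] at hpos
  tauto

lemma disj0 {n m : ℕ} (h : Bb m = Aa n) : n = 0 ∧ m = 0 := by
  rcases Nat.eq_zero_or_pos n with hn | hn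
  · subst hn
    rw [Aa_zero] at h
    simp only [Bb] at h
    constructor
    · rfl
    · omega
  · rcases Nat.eq_zero_or_pos m with hm | hm
    · subst hm
      simp only [Bb, Aa_zero] at h
      have := Aa_pos hn
      omega
    · exact absurd h.symm (disj hn hm)


def InS (p : ℕ × ℕ) : Prop := ∃ n, sortPair p = (Aa n, Bb n)

lemma sortPair_eq {a b : ℕ} (h : a ≤ b) : sortPair (a, b) = (a, b) := by
  simp [sortPair, min_eq_left h, max_eq_right h]

lemma Bb_zero : Bb 0 = 0 := by simp [Bb, Aa_zero]

lemma moves_out {p q : ℕ × ℕ} {n : ℕ} (hp : sortPair p = (Aa n, Bb n)) (hm : EMove p q) :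
    ¬ InS q := by
  rintro ⟨m, hq⟩
  have ha : min p.1 p.2 = Aa n := congrArg Prod.fst hp
  have hb : max p.1 p.2 = Bb n := congrArg Prod.snd hp
  have hABn : Aa n ≤ Bb n := Nat.le_add_right _ _
  rcases hm with ⟨t, ht, hq'⟩ | ⟨t, ht, hq'⟩ | ⟨k, hk0, hk, hq'⟩ | ⟨k, l, hlk, hk, hq'⟩
  · rw [ha] at hq'
    rw [hb] at ht
    rw [hq] at hq'
    simp only [sortPair, Prod.mk.injEq] at hq'
    rcases le_total t (Aa n) with hta | hta
    · have hBm : Bb m = Aa n := by omega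
      obtain ⟨hn0, hm0⟩ := disj0 hBm
      subst hn0
      rw [Bb_zero] at ht
      omega
    · have hAm : Aa m = Aa n := by omega
      have hmn : m = n := Aa_strictMono.injective hAm
      subst hmn
      have : Bb m = t := by omega
      omega
  · rw [ha] at ht
    rw [hb] at hq'
    rw [hq] at hq'
    simp only [sortPair, Prod.mk.injEq] at hq'
    have hBm : Bb m = Bb n := by omega
    have hmn : m = n := Bb_strictMono.injective hBm
    subst hmn
    omega
  · rw [ha] at hk
    rw [ha, hb] at hq'
    rw [hq] at hq'
    simp only [Prod.mk.injEq] at hq'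
    simp only [Bb] at hq' hABn
    have hmn : m = n := by omega
    subst hmn
    omega
  · rw [ha] at hk
    rw [ha, hb] at hq'
    rw [hq] at hq'
    have hsort : Aa n - k ≤ Bb n - l := by simp only [Bb]; omega
    rw [sortPair_eq hsort] at hq'
    simp only [Prod.mk.injEq] at hq'
    simp only [Bb] at hq'
    have hnm : n < m := by omega
    have := Aa_strictMono hnm
    omega

lemma move_in {p : ℕ × ℕ} (hp : ¬ InS p) : ∃ q, EMove p q ∧ InS q := by
  obtain ⟨m, hm | ⟨hm0, hm⟩⟩ := cover (min p.1 p.2)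
  · rcases lt_trichotomy (max p.1 p.2) (Bb m) with hb | hb | hb
    · -- move type 3
      set a := min p.1 p.2 with ha
      set b := max p.1 p.2 with hbdef
      have hab : a ≤ b := min_le_max
      set d := b - a with hd
      have hdm : d < m := by simp only [Bb] at hb; omega
      have hAd : Aa d < Aa m := Aa_strictMono hdm
      have hAB : Aa d ≤ Bb d := Nat.le_add_right _ _
      refine ⟨(Aa d, Bb d), Or.inr (Or.inr (Or.inl ⟨a - Aa d, by omega, by omega, ?_⟩)), d,
        sortPair_eq hAB⟩
      rw [sortPair_eq hAB]
      simp only [Prod.mk.injEq, Bb]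
      omega
    · exact absurd ⟨m, by rw [show sortPair p = (min p.1 p.2, max p.1 p.2) from rfl, hm, hb]⟩ hp
    · -- move type 1, reduce large pile to Bb m
      have hAB : Aa m ≤ Bb m := Nat.le_add_right _ _
      refine ⟨(Aa m, Bb m), Or.inl ⟨Bb m, hb, ?_⟩, m, sortPair_eq hAB⟩
      rw [hm]
  · -- min pile is Bb m with m > 0: move type 1 reduce large pile to Aa m
    have hAB : Aa m ≤ Bb m := Nat.le_add_right _ _
    have h1 : Aa m < min p.1 p.2 := by
      have := Aa_pos hm0
      simp only [Bb] at hm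
      omega
    have h2 : Aa m < max p.1 p.2 := lt_of_lt_of_le h1 min_le_max
    refine ⟨(Aa m, Bb m), Or.inl ⟨Aa m, h2, ?_⟩, m, sortPair_eq hAB⟩
    rw [sortPair_eq hAB]
    simp only [sortPair, Prod.mk.injEq]
    omega

lemma EPPos_iff_InS : ∀ N (p : ℕ × ℕ), p.1 + p.2 < N → (EPPos p ↔ InS p) := by
  intro N
  induction N with
  | zero => exact fun p h => absurd h (by omega)
  | succ N ih =>
    intro p hp
    rw [EPPos]
    constructor
    · intro h
      by_contra hS
      obtain ⟨q, hmq, hq⟩ := move_in hS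
      exact h q hmq ((ih q (by have := hmq.sum_lt; omega)).2 hq)
    · rintro ⟨n, hn⟩ q hmq hq
      exact moves_out hn hmq ((ih q (by have := hmq.sum_lt; omega)).1 hq)

end Aux

/-- The P-positions of E-Wythoff are exactly the pairs
`(⌊φn⌋, ⌊φn⌋ + n)`, `n ≥ 0`, up to swapping coordinates. -/
theorem EWythoff_P_positions (a b : ℕ) :
    EPPos (a, b) ↔ ∃ n : ℕ, sortPair (a, b) = (⌊phi * n⌋₊, ⌊phi * n⌋₊ + n) :=
  EPPos_iff_InS (a + b + 1) (a, b) (by omega)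

end
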